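/- arXiv:1303.4834 — 8 statements merged into one kernel-verified Lean document; each statement's English description precedes it below -/
import Mathlib

section
/- Let S be a 2×2 real matrix with det S = 1 and |trace S| < 2, let I − S be invertible, let η ∈ ℝ², and let (Y_n) be a sequence in ℝ² satisfying Y_{n+1} = S·Y_n + η for all n ∈ ℕ. Then the set {Y_n : n ∈ ℕ} is bounded. -/
open Matrix Bornology

/-- The positive semi-orbit of `x` under the continuous dynamical system `y' = A y`,
i.e. the set `{exp (t A) x : t ≥ 0}`. -/
noncomputable def contOrbit (A : Matrix (Fin 2) (Fin 2) ℝ) (x : EuclideanSpace ℝ (Fin 2)) :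
    Set (EuclideanSpace ℝ (Fin 2)) :=
  {y | ∃ t : ℝ, 0 ≤ t ∧ y = (NormedSpace.exp (t • A)).mulVec x}

/-- The positive semi-orbit of `x` under the discrete dynamical system `y_{n+1} = S y_n`,
i.e. the set `{Sⁿ x : n ∈ ℕ}`. -/
def discOrbit (S : Matrix (Fin 2) (Fin 2) ℝ) (x : EuclideanSpace ℝ (Fin 2)) :
    Set (EuclideanSpace ℝ (Fin 2)) :=
  {y | ∃ n : ℕ, y = (S ^ n).mulVec x}

/-- Cayley–Hamilton for 2×2 matrices. -/
lemma sq_eq_trace_smul (S : Matrix (Fin 2) (Fin 2) ℝ) :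
    S * S = S.trace • S - S.det • 1 := by
  ext i j
  fin_cases i <;> fin_cases j <;>
    simp [Matrix.mul_apply, Matrix.trace, Matrix.det_fin_two, Fin.sum_univ_two,
      Matrix.one_apply] <;> ring

theorem stmt_10 (S : Matrix (Fin 2) (Fin 2) ℝ) (hDet : S.det = 1) (hTr : |S.trace| < 2)
    (hS : IsUnit (1 - S)) (η : EuclideanSpace ℝ (Fin 2)) (Y : ℕ → EuclideanSpace ℝ (Fin 2))
    (hY : ∀ n : ℕ, Y (n + 1) = (show EuclideanSpace ℝ (Fin 2) from WithLp.toLp 2 (S.mulVec (Y n))) + η) :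
    IsBounded (Set.range Y) := by
  set t := S.trace with ht
  have h1 : -1 < t / 2 := by rw [abs_lt] at hTr; linarith [hTr.1]
  have h2 : t / 2 < 1 := by rw [abs_lt] at hTr; linarith [hTr.2]
  set θ := Real.arccos (t / 2) with hθ
  have hcos : Real.cos θ = t / 2 := Real.cos_arccos (le_of_lt h1) (le_of_lt h2)
  have hθpos : 0 < θ := Real.arccos_pos.mpr h2
  have hθlt : θ < Real.pi := lt_of_le_of_ne (Real.arccos_le_pi _)
    (fun h => absurd (Real.arccos_eq_pi.mp h) (by linarith))
  have hsin : 0 < Real.sin θ := Real.sin_pos_of_pos_of_lt_pi hθpos hθlt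
  set f : ℕ → ℝ := fun n => Real.sin (n * θ) / Real.sin θ with hf
  have hfb : ∀ n, |f n| ≤ 1 / Real.sin θ := by
    intro n
    rw [hf, abs_div, abs_of_pos hsin]
    exact div_le_div_of_nonneg_right (abs_le.mpr ⟨Real.neg_one_le_sin _, Real.sin_le_one _⟩) hsin.le
  -- power formula
  have hpow : ∀ n : ℕ, S ^ (n + 1) = f (n + 1) • S + (-(f n)) • (1 : Matrix (Fin 2) (Fin 2) ℝ) := by
    intro n
    induction n with
    | zero =>
      simp [hf, Real.sin_zero]
      rw [div_self (ne_of_gt hsin)]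
      simp
    | succ n ih =>
      have key : f (n + 2) = t * f (n + 1) - f n := by
        rw [hf]
        have : ((n : ℝ) + 2) * θ = ((n + 1 : ℝ) * θ) + θ := by ring
        push_cast
        rw [this, Real.sin_add]
        have h3 : (n : ℝ) * θ = ((n + 1 : ℝ) * θ) - θ := by ring
        rw [h3, Real.sin_sub]
        field_simp
        rw [hcos]
        ring
      rw [pow_succ, ih]
      rw [add_mul, smul_mul_assoc, smul_mul_assoc, one_mul, sq_eq_trace_smul, hDet, ← ht]
      have hf2 : f (n + 1 + 1) = t * f (n + 1) - f n := by push_cast at key ⊢; exact key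
      rw [hf2]
      simp [smul_sub, smul_smul]
      module
  -- fixed point
  have hdet1 : IsUnit (1 - S).det := (Matrix.isUnit_iff_isUnit_det _).mp hS
  set p : EuclideanSpace ℝ (Fin 2) := WithLp.toLp 2 ((1 - S)⁻¹.mulVec η) with hp
  have hfix : (show EuclideanSpace ℝ (Fin 2) from WithLp.toLp 2 (S.mulVec p)) + η = p := by
    have h := Matrix.mul_nonsing_inv (1 - S) hdet1
    have : (1 - S).mulVec p = η := by
      rw [hp, Matrix.mulVec_mulVec, h, Matrix.one_mulVec]
    rw [Matrix.sub_mulVec, Matrix.one_mulVec] at this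
    ext i
    have := congrFun this i
    simp only [PiLp.sub_apply, Pi.sub_apply] at this
    simp only [PiLp.add_apply, Pi.add_apply, PiLp.toLp_apply]
    linarith
  -- orbit formula
  have horb : ∀ n : ℕ, Y n - p = (show EuclideanSpace ℝ (Fin 2) from WithLp.toLp 2 ((S ^ n).mulVec (WithLp.ofLp (Y 0 - p)))) := by
    intro n
    induction n with
    | zero => simp [Matrix.one_mulVec]
    | succ n ih =>
      rw [hY n]
      have : (show EuclideanSpace ℝ (Fin 2) from WithLp.toLp 2 (S.mulVec (Y n))) + η - p
          = WithLp.toLp 2 (S.mulVec (WithLp.ofLp (Y n - p))) := by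
        ext i
        simp only [PiLp.add_apply, PiLp.sub_apply, Pi.add_apply, Pi.sub_apply, PiLp.toLp_apply]
        have h1 := congrFun (congrArg WithLp.ofLp hfix) i
        simp only [PiLp.add_apply, Pi.add_apply, PiLp.toLp_apply] at h1
        have h2 : S.mulVec (WithLp.ofLp (Y n - p)) i = S.mulVec (Y n) i - S.mulVec p i := by
          simp [Matrix.mulVec_sub]
        rw [h2]; linarith
      rw [this, ih, WithLp.ofLp_toLp, Matrix.mulVec_mulVec, ← pow_succ']
  set z : EuclideanSpace ℝ (Fin 2) := Y 0 - p with hz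
  set C : ℝ := ‖p‖ + (1 / Real.sin θ) * ‖(show EuclideanSpace ℝ (Fin 2) from WithLp.toLp 2 (S.mulVec z))‖
      + (1 / Real.sin θ) * ‖z‖ + ‖Y 0‖ with hC
  rw [isBounded_iff_forall_norm_le]
  refine ⟨C, ?_⟩
  rintro _ ⟨n, rfl⟩
  have hnorms : (0:ℝ) ≤ ‖p‖ := norm_nonneg _
  have hnz : (0:ℝ) ≤ ‖z‖ := norm_nonneg _
  have hnSz : (0:ℝ) ≤ ‖(show EuclideanSpace ℝ (Fin 2) from WithLp.toLp 2 (S.mulVec z))‖ := norm_nonneg _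
  have hsinv : (0:ℝ) ≤ 1 / Real.sin θ := by positivity
  match n with
  | 0 =>
    have : (0:ℝ) ≤ (1 / Real.sin θ) * ‖(show EuclideanSpace ℝ (Fin 2) from WithLp.toLp 2 (S.mulVec z))‖
        + (1 / Real.sin θ) * ‖z‖ + ‖p‖ := by positivity
    rw [hC]; linarith
  | Nat.succ n =>
    have hYn : Y (n + 1) = (show EuclideanSpace ℝ (Fin 2) from WithLp.toLp 2 ((S ^ (n+1)).mulVec z)) + p := by
      have := horb (n + 1)
      ext i
      have := congrFun (congrArg WithLp.ofLp this) i
      simp only [PiLp.sub_apply, Pi.sub_apply, PiLp.toLp_apply] at this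
      simp only [PiLp.add_apply, Pi.add_apply, PiLp.toLp_apply]
      linarith
    have hmv : (show EuclideanSpace ℝ (Fin 2) from WithLp.toLp 2 ((S ^ (n+1)).mulVec z))
        = f (n+1) • (show EuclideanSpace ℝ (Fin 2) from WithLp.toLp 2 (S.mulVec z)) + (-(f n)) • z := by
      rw [hpow n]
      have hmv' : (f (n+1) • S + (-(f n)) • (1 : Matrix (Fin 2) (Fin 2) ℝ)).mulVec z
          = f (n+1) • S.mulVec z + (-(f n)) • (show Fin 2 → ℝ from z) := by
        rw [Matrix.add_mulVec, Matrix.smul_mulVec, Matrix.smul_mulVec,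
          Matrix.one_mulVec]
      ext i
      have := congrFun hmv' i
      simp only [Pi.add_apply, Pi.smul_apply, smul_eq_mul] at this
      simp only [PiLp.add_apply, PiLp.smul_apply, Pi.add_apply, Pi.smul_apply, smul_eq_mul, PiLp.toLp_apply]
      linarith
    have hb : ‖(show EuclideanSpace ℝ (Fin 2) from WithLp.toLp 2 ((S ^ (n+1)).mulVec z))‖
        ≤ (1 / Real.sin θ) * ‖(show EuclideanSpace ℝ (Fin 2) from WithLp.toLp 2 (S.mulVec z))‖
          + (1 / Real.sin θ) * ‖z‖ := by
      rw [hmv]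
      calc ‖f (n+1) • (show EuclideanSpace ℝ (Fin 2) from WithLp.toLp 2 (S.mulVec z)) + (-(f n)) • z‖
          ≤ ‖f (n+1) • (show EuclideanSpace ℝ (Fin 2) from WithLp.toLp 2 (S.mulVec z))‖ + ‖(-(f n)) • z‖ :=
            norm_add_le _ _
        _ = |f (n+1)| * ‖(show EuclideanSpace ℝ (Fin 2) from WithLp.toLp 2 (S.mulVec z))‖ + |f n| * ‖z‖ := by
            rw [norm_smul, norm_smul]; simp [Real.norm_eq_abs]
        _ ≤ (1 / Real.sin θ) * ‖(show EuclideanSpace ℝ (Fin 2) from WithLp.toLp 2 (S.mulVec z))‖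
            + (1 / Real.sin θ) * ‖z‖ := by
            gcongr <;> [exact hfb (n+1); exact hfb n]
    have := norm_add_le (show EuclideanSpace ℝ (Fin 2) from WithLp.toLp 2 ((S ^ (n+1)).mulVec z)) p
    rw [← hYn] at this
    have h0 : (0:ℝ) ≤ ‖Y 0‖ := norm_nonneg _
    rw [hC]; linarith
end

section
/- Let a, b ∈ ℝ with ab > 0, and let 0 < τ < 2/√(ab). Let S(τ) be the 2×2 real matrix with rows (1, −τb) and (τa, 1 − τ²ab). Then for every x ∈ ℝ², the set {S(τ)ⁿ·x : n ∈ ℕ} is bounded. -/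
open Matrix Bornology

/-- Positive definiteness of a binary quadratic form with negative discriminant. -/
lemma quad_pos_def (a b c : ℝ) (ha : 0 < a) (hb : 0 < b) (hc : c ^ 2 < 4 * a * b) :
    ∃ ε > 0, ∀ p q : ℝ, ε * (p ^ 2 + q ^ 2) ≤ a * p ^ 2 + b * q ^ 2 + c * (p * q) := by
  refine ⟨(4 * a * b - c ^ 2) / (4 * (a + b)), div_pos (by linarith) (by linarith), fun p q => ?_⟩
  set ε := (4 * a * b - c ^ 2) / (4 * (a + b)) with hε
  have hab : 0 < a + b := by linarith
  have hε0 : 0 < ε := div_pos (by linarith) (by linarith)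
  have hεa : ε < a := by
    rw [hε, div_lt_iff₀ (by positivity)]
    nlinarith [sq_nonneg c, mul_pos ha hb]
  have hdisc : c ^ 2 ≤ 4 * (a - ε) * (b - ε) := by
    have h4 : ε * (4 * (a + b)) = 4 * a * b - c ^ 2 := by
      rw [hε]; field_simp
    nlinarith [sq_nonneg ε]
  nlinarith [sq_nonneg (2 * (a - ε) * p + c * q), sq_nonneg q,
    mul_nonneg (sub_nonneg.2 hdisc) (sq_nonneg q)]

theorem stmt_12 (a b τ : ℝ) (hab : 0 < a * b) (hτ0 : 0 < τ) (hτ : τ < 2 / Real.sqrt (a * b))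
    (x : EuclideanSpace ℝ (Fin 2)) :
    IsBounded (discOrbit !![1, -τ * b; τ * a, 1 - τ ^ 2 * a * b] x) := by
  set S : Matrix (Fin 2) (Fin 2) ℝ := !![1, -τ * b; τ * a, 1 - τ ^ 2 * a * b] with hS
  -- the conserved quadratic form
  set f : EuclideanSpace ℝ (Fin 2) → ℝ :=
    fun v => a * (v 0) ^ 2 + b * (v 1) ^ 2 - τ * a * b * (v 0 * v 1) with hf
  -- τ² (ab)² < 4 ab
  have hsq : τ ^ 2 * (a * b) < 4 := by
    have hs : 0 < Real.sqrt (a * b) := Real.sqrt_pos.2 hab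
    have h1 : τ * Real.sqrt (a * b) < 2 := by
      rw [div_eq_mul_inv] at hτ
      calc τ * Real.sqrt (a * b) < 2 * (Real.sqrt (a * b))⁻¹ * Real.sqrt (a * b) := by
            exact mul_lt_mul_of_pos_right hτ hs
        _ = 2 := by field_simp
    have h2 : (τ * Real.sqrt (a * b)) ^ 2 < 4 := by
      nlinarith [mul_nonneg hτ0.le hs.le]
    have h3 : (τ * Real.sqrt (a * b)) ^ 2 = τ ^ 2 * (a * b) := by
      rw [mul_pow, Real.sq_sqrt hab.le]
    linarith [h3 ▸ h2]
  have hdisc : (τ * a * b) ^ 2 < 4 * (a * b) := by nlinarith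
  -- definiteness: ∃ ε > 0, ε‖v‖² ≤ |f v|
  have hdef : ∃ ε > 0, ∀ v : EuclideanSpace ℝ (Fin 2),
      ε * ((v 0) ^ 2 + (v 1) ^ 2) ≤ |f v| := by
    rcases lt_or_gt_of_ne (fun h : a = 0 => by simp [h] at hab) with ha | ha
    · have hb : b < 0 := by nlinarith
      obtain ⟨ε, hε, h⟩ := quad_pos_def (-a) (-b) (τ * a * b) (by linarith) (by linarith)
        (by nlinarith)
      refine ⟨ε, hε, fun v => le_trans ?_ (neg_le_abs (f v))⟩
      have := h (v 0) (v 1)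
      simp only [hf]
      linarith
    · have hb : 0 < b := by nlinarith
      obtain ⟨ε, hε, h⟩ := quad_pos_def a b (-(τ * a * b)) ha hb (by nlinarith)
      refine ⟨ε, hε, fun v => le_trans ?_ (le_abs_self (f v))⟩
      have := h (v 0) (v 1)
      simp only [hf]
      linarith
  obtain ⟨ε, hε, hlow⟩ := hdef
  -- invariance of f under S
  have hinv : ∀ v : EuclideanSpace ℝ (Fin 2), f (WithLp.toLp 2 (S.mulVec v)) = f v := by
    intro v
    have h0 : S.mulVec v 0 = v 0 - τ * b * v 1 := by
      simp [hS, Matrix.mulVec, dotProduct, Fin.sum_univ_two, Matrix.vecHead, Matrix.vecTail]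
      try ring
    have h1 : S.mulVec v 1 = τ * a * v 0 + (1 - τ ^ 2 * a * b) * v 1 := by
      simp [hS, Matrix.mulVec, dotProduct, Fin.sum_univ_two, Matrix.vecHead, Matrix.vecTail]
      try ring
    simp only [hf]
    show a * (S.mulVec v 0) ^ 2 + b * (S.mulVec v 1) ^ 2
        - τ * a * b * (S.mulVec v 0 * S.mulVec v 1)
      = a * (v 0) ^ 2 + b * (v 1) ^ 2 - τ * a * b * (v 0 * v 1)
    rw [h0, h1]; ring
  have hinvn : ∀ n : ℕ, f (WithLp.toLp 2 ((S ^ n).mulVec x)) = f x := by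
    intro n
    induction n with
    | zero => simp
    | succ n ih =>
      rw [pow_succ', ← Matrix.mulVec_mulVec]
      rw [hinv (WithLp.toLp 2 ((S ^ n).mulVec x))]
      exact ih
  -- norm formula
  have hbound : ∀ y : EuclideanSpace ℝ (Fin 2), ‖y‖ ^ 2 = (y 0) ^ 2 + (y 1) ^ 2 := by
    intro y
    rw [EuclideanSpace.norm_eq, Real.sq_sqrt (by positivity)]
    simp [Fin.sum_univ_two, sq_abs]
  -- conclude boundedness
  rw [isBounded_iff_forall_norm_le]
  refine ⟨Real.sqrt (|f x| / ε), fun y hy => ?_⟩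
  obtain ⟨n, hy⟩ := hy
  have hfy : f y = f x := by rw [← WithLp.toLp_ofLp (x := y), hy]; exact hinvn n
  have h1 : ε * ‖y‖ ^ 2 ≤ |f x| := by
    rw [hbound, ← hfy]; exact hlow y
  rw [Real.le_sqrt (norm_nonneg _), le_div_iff₀ hε]
  linarith
  positivity
end

section
/- Let a, b ∈ ℝ with ab > 0, and let τ > 2/√(ab). Let S(τ) be the 2×2 real matrix with rows (1, −τb) and (τa, 1 − τ²ab). Then trace S(τ) < −2 and there exists x ∈ ℝ² such that the set {S(τ)ⁿ·x : n ∈ ℕ} is unbounded, even though every positive semi-orbit {exp(tA)·x : t ≥ 0} of the matrix A with rows (0, −b) and (a, 0) is bounded. -/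
open Matrix Bornology

attribute [local instance] Matrix.linftyOpNormedRing Matrix.linftyOpNormedAlgebra

open NormedSpace in
/-- The continuous linear map `M ↦ (M *ᵥ x) i`. -/
noncomputable def evalCLM (x : Fin 2 → ℝ) (i : Fin 2) : Matrix (Fin 2) (Fin 2) ℝ →L[ℝ] ℝ :=
  LinearMap.toContinuousLinearMap
  { toFun := fun M => M.mulVec x i
    map_add' := by intro M N; simp [Matrix.add_mulVec]
    map_smul' := by intro c M; simp [Matrix.smul_mulVec] }

lemma abs_apply_le_norm (y : EuclideanSpace ℝ (Fin 2)) (i : Fin 2) : |y i| ≤ ‖y‖ := by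
  rw [EuclideanSpace.norm_eq, Fin.sum_univ_two, ← Real.sqrt_sq_eq_abs]
  apply Real.sqrt_le_sqrt
  fin_cases i <;> simp [Real.norm_eq_abs, sq_abs] <;> nlinarith [sq_nonneg (y 0), sq_nonneg (y 1)]

open NormedSpace in
lemma contBounded (a b : ℝ) (hab : 0 < a * b) (x : EuclideanSpace ℝ (Fin 2)) :
    IsBounded (contOrbit !![0, -b; a, 0] x) := by
  set A : Matrix (Fin 2) (Fin 2) ℝ := !![0, -b; a, 0] with hA
  set f : ℝ → (Fin 2 → ℝ) := fun t => (exp (t • A)).mulVec x with hf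
  have hderiv : ∀ (i : Fin 2) (t : ℝ),
      HasDerivAt (fun u => f u i) (A.mulVec (f t) i) t := by
    intro i t
    have h := (evalCLM (x : Fin 2 → ℝ) i).hasFDerivAt.comp_hasDerivAt t
      (hasDerivAt_exp_smul_const' A t)
    refine h.congr_deriv ?_
    change ((A * exp (t • A)) *ᵥ x) i = _
    rw [← Matrix.mulVec_mulVec]
  have hA0 : ∀ t, A.mulVec (f t) 0 = -b * f t 1 := by
    intro t
    simp [hA, Matrix.mulVec, dotProduct, Fin.sum_univ_two]
  have hA1 : ∀ t, A.mulVec (f t) 1 = a * f t 0 := by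
    intro t
    simp [hA, Matrix.mulVec, dotProduct, Fin.sum_univ_two]
  have hEderiv : ∀ t, HasDerivAt (fun u => a * (f u 0) ^ 2 + b * (f u 1) ^ 2) 0 t := by
    intro t
    have h0 := hderiv 0 t
    have h1 := hderiv 1 t
    rw [hA0] at h0; rw [hA1] at h1
    have := (((h0.pow 2).const_mul a).add ((h1.pow 2).const_mul b))
    refine this.congr_deriv ?_
    simp only [Nat.reduceSub, Nat.cast_ofNat, pow_one]
    ring
  have hEconst : ∀ t, a * (f t 0) ^ 2 + b * (f t 1) ^ 2
      = a * (f 0 0) ^ 2 + b * (f 0 1) ^ 2 := by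
    intro t
    exact is_const_of_deriv_eq_zero (fun u => (hEderiv u).differentiableAt)
      (fun u => (hEderiv u).deriv) t 0
  set E0 := a * (f 0 0) ^ 2 + b * (f 0 1) ^ 2 with hE0
  have ha : a ≠ 0 := fun h => by simp [h] at hab
  have hb : b ≠ 0 := fun h => by simp [h] at hab
  set c := min |a| |b| with hc
  have hcpos : 0 < c := lt_min (abs_pos.2 ha) (abs_pos.2 hb)
  have hsign : (0 < a ∧ 0 < b) ∨ (a < 0 ∧ b < 0) := by
    rcases mul_pos_iff.mp hab with h | h
    · exact Or.inl h
    · exact Or.inr h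
  set R := Real.sqrt (|E0| / c) with hR
  rw [isBounded_iff_forall_norm_le]
  refine ⟨R, ?_⟩
  rintro y ⟨t, _, hy⟩
  have hy0 : y 0 = f t 0 := by rw [hy]
  have hy1 : y 1 = f t 1 := by rw [hy]
  have hEt := hEconst t
  have hsq : (f t 0) ^ 2 + (f t 1) ^ 2 ≤ |E0| / c := by
    have habs : |E0| = |a| * (f t 0) ^ 2 + |b| * (f t 1) ^ 2 := by
      rw [← hEt]
      rcases hsign with ⟨h1, h2⟩ | ⟨h1, h2⟩
      · rw [abs_of_nonneg (by positivity), abs_of_pos h1, abs_of_pos h2]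
      · rw [abs_of_nonpos (by nlinarith [sq_nonneg (f t 0), sq_nonneg (f t 1)]),
          abs_of_neg h1, abs_of_neg h2]; ring
    rw [le_div_iff₀ hcpos, habs]
    have h0 : c * (f t 0) ^ 2 ≤ |a| * (f t 0) ^ 2 :=
      mul_le_mul_of_nonneg_right (min_le_left _ _) (sq_nonneg _)
    have h1 : c * (f t 1) ^ 2 ≤ |b| * (f t 1) ^ 2 :=
      mul_le_mul_of_nonneg_right (min_le_right _ _) (sq_nonneg _)
    nlinarith
  rw [EuclideanSpace.norm_eq, Fin.sum_univ_two, hR]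
  apply Real.sqrt_le_sqrt
  simp only [Real.norm_eq_abs, sq_abs, hy0, hy1]
  exact hsq

theorem stmt_13 (a b τ : ℝ) (hab : 0 < a * b) (hτ : 2 / Real.sqrt (a * b) < τ) :
    (!![1, -τ * b; τ * a, 1 - τ ^ 2 * a * b] : Matrix (Fin 2) (Fin 2) ℝ).trace < -2 ∧
    (∃ x : EuclideanSpace ℝ (Fin 2),
      ¬ IsBounded (discOrbit !![1, -τ * b; τ * a, 1 - τ ^ 2 * a * b] x)) ∧
    (∀ x : EuclideanSpace ℝ (Fin 2), IsBounded (contOrbit !![0, -b; a, 0] x)) := by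
  have hs : 0 < Real.sqrt (a * b) := Real.sqrt_pos.2 hab
  have hτ0 : 0 < τ := lt_trans (div_pos two_pos hs) hτ
  have hτs : 2 < τ * Real.sqrt (a * b) := (div_lt_iff₀ hs).mp hτ
  have hsq : Real.sqrt (a * b) ^ 2 = a * b := Real.sq_sqrt hab.le
  have hkey : 4 < τ ^ 2 * a * b := by nlinarith
  have htr : (!![1, -τ * b; τ * a, 1 - τ ^ 2 * a * b] : Matrix (Fin 2) (Fin 2) ℝ).trace
      = 2 - τ ^ 2 * a * b := by
    simp [Matrix.trace, Matrix.diag, Fin.sum_univ_two]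
    ring
  refine ⟨by rw [htr]; linarith, ?_, fun x => contBounded a b hab x⟩
  set t : ℝ := 2 - τ ^ 2 * a * b with htdef
  have ht : t < -2 := by rw [htdef]; linarith
  set d := Real.sqrt (t ^ 2 - 4) with hd
  have hd2 : d ^ 2 = t ^ 2 - 4 := Real.sq_sqrt (by nlinarith)
  have hd0 : 0 ≤ d := Real.sqrt_nonneg _
  set l : ℝ := (t - d) / 2 with hl
  have hroot : l ^ 2 - t * l + 1 = 0 := by rw [hl]; field_simp; nlinarith
  have hllt : l < -1 := by rw [hl]; linarith
  set S : Matrix (Fin 2) (Fin 2) ℝ := !![1, -τ * b; τ * a, 1 - τ ^ 2 * a * b] with hS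
  set v : Fin 2 → ℝ := ![τ * b, 1 - l] with hv
  have heig : S.mulVec v = fun i => l * v i := by
    funext i
    fin_cases i <;>
      simp [hS, hv, Matrix.mulVec, dotProduct, Fin.sum_univ_two] <;>
      nlinarith [hroot]
  have hpow : ∀ n : ℕ, (S ^ n).mulVec v = fun i => l ^ n * v i := by
    intro n
    induction n with
    | zero => funext i; simp
    | succ n ih =>
      rw [pow_succ', ← Matrix.mulVec_mulVec, ih]
      funext i
      have : (S.mulVec fun j => l ^ n * v j) = fun j => l ^ n * (S.mulVec v) j := by
        funext j
        simp [Matrix.mulVec, dotProduct, Fin.sum_univ_two]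
        ring
      rw [this, heig]
      ring
  refine ⟨WithLp.toLp 2 v, ?_⟩
  intro hbdd
  obtain ⟨C, hC⟩ := isBounded_iff_forall_norm_le.mp hbdd
  have h1l : (0:ℝ) < 1 - l := by linarith
  have hCb : ∀ n : ℕ, |l| ^ n * (1 - l) ≤ C := by
    intro n
    have hmem : WithLp.toLp 2 (fun i => l ^ n * v i) ∈ discOrbit S (WithLp.toLp 2 v) := ⟨n, (hpow n).symm⟩
    have := hC _ hmem
    have h2 : |l ^ n * v 1| ≤ C := le_trans (abs_apply_le_norm (WithLp.toLp 2 (fun i => l ^ n * v i)) 1) this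
    have hv1 : v 1 = 1 - l := by simp [hv]
    rw [hv1, abs_mul, abs_pow, abs_of_pos h1l] at h2
    exact h2
  have h1abs : 1 < |l| := by rw [abs_of_neg (by linarith : l < 0)]; linarith
  obtain ⟨n, hn⟩ := pow_unbounded_of_one_lt (C / (1 - l)) h1abs
  have := hCb n
  rw [div_lt_iff₀ h1l] at hn
  linarith
end

section
/- Let a, b ∈ ℝ with ab < 0, let τ > 0, and let S(τ) be the 2×2 real matrix with rows (1, −τb) and (τa, 1 − τ²ab). Then the set {x ∈ ℝ² : {S(τ)ⁿ·x : n ∈ ℕ} is bounded} is a linear subspace of ℝ² of dimension 1; in particular its dimension equals the dimension of the subspace {x ∈ ℝ² : {exp(tA)·x : t ≥ 0} is bounded}, where A is the matrix with rows (0, −b) and (a, 0). -/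
open Matrix Bornology

/-- mulVec by a fixed vector, as a linear map in the matrix. -/
def mulVecL (x : Fin 2 → ℝ) : Matrix (Fin 2) (Fin 2) ℝ →ₗ[ℝ] (Fin 2 → ℝ) where
  toFun N := N.mulVec x
  map_add' N P := Matrix.add_mulVec N P x
  map_smul' c N := Matrix.smul_mulVec c N x

lemma pow_mulVec_eig (M : Matrix (Fin 2) (Fin 2) ℝ) (x : Fin 2 → ℝ) (r : ℝ)
    (h : M.mulVec x = r • x) (n : ℕ) :
    (M ^ n).mulVec x = r ^ n • x := by
  induction n with
  | zero => simp
  | succ n ih =>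
      rw [pow_succ', ← Matrix.mulVec_mulVec, ih, Matrix.mulVec_smul, h, smul_smul, pow_succ',
        mul_comm]

lemma pow_left_eig (M : Matrix (Fin 2) (Fin 2) ℝ) (x : Fin 2 → ℝ)
    (φ : EuclideanSpace ℝ (Fin 2) →ₗ[ℝ] ℝ) (r : ℝ)
    (h : ∀ y, φ (WithLp.toLp 2 (M.mulVec y)) = r * φ (WithLp.toLp 2 y)) (n : ℕ) :
    φ (WithLp.toLp 2 ((M ^ n).mulVec x)) = r ^ n * φ (WithLp.toLp 2 x) := by
  induction n with
  | zero => simp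
  | succ n ih =>
      rw [pow_succ', ← Matrix.mulVec_mulVec, h, ih, pow_succ']; ring

section helpersNormed

attribute [local instance] Matrix.linftyOpNormedAddCommGroup Matrix.linftyOpNormedRing
  Matrix.linftyOpNormedAlgebra

variable (M : Matrix (Fin 2) (Fin 2) ℝ) (x : Fin 2 → ℝ)

lemma exp_mulVec_eig' (r : ℝ) (h : M.mulVec x = r • x) :
    (NormedSpace.exp M).mulVec x = Real.exp r • x := by
  have hsum := NormedSpace.expSeries_summable' (𝕂 := ℝ) M
  rw [NormedSpace.exp_eq_tsum ℝ]
  have hL : (∑' n : ℕ, ((n.factorial : ℝ)⁻¹) • M ^ n).mulVec x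
      = (mulVecL x).toContinuousLinearMap (∑' n : ℕ, ((n.factorial : ℝ)⁻¹) • M ^ n) := rfl
  rw [hL, ContinuousLinearMap.map_tsum _ (by exact hsum)]
  have : ∀ n : ℕ, (mulVecL x).toContinuousLinearMap (((n.factorial : ℝ)⁻¹) • M ^ n)
      = ((n.factorial : ℝ)⁻¹ * r ^ n) • x := by
    intro n
    show ((n.factorial : ℝ)⁻¹ • M ^ n).mulVec x = _
    rw [Matrix.smul_mulVec, pow_mulVec_eig M x r h n, smul_smul]
  simp_rw [this]
  rw [Summable.tsum_smul_const]
  · congr 1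
    rw [Real.exp_eq_exp_ℝ, NormedSpace.exp_eq_tsum ℝ]
    simp [smul_eq_mul]
  · exact (NormedSpace.expSeries_summable' (𝕂 := ℝ) r).congr (by simp [smul_eq_mul])

lemma exp_left_eig' (φ : EuclideanSpace ℝ (Fin 2) →ₗ[ℝ] ℝ) (r : ℝ)
    (h : ∀ y, φ (WithLp.toLp 2 (M.mulVec y)) = r * φ (WithLp.toLp 2 y)) :
    φ (WithLp.toLp 2 ((NormedSpace.exp M).mulVec x)) = Real.exp r * φ (WithLp.toLp 2 x) := by
  have hsum := NormedSpace.expSeries_summable' (𝕂 := ℝ) M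
  rw [NormedSpace.exp_eq_tsum ℝ]
  have hL : φ (WithLp.toLp 2 ((∑' n : ℕ, ((n.factorial : ℝ)⁻¹) • M ^ n).mulVec x))
      = (φ ∘ₗ (WithLp.linearEquiv 2 ℝ (Fin 2 → ℝ)).symm.toLinearMap ∘ₗ mulVecL x).toContinuousLinearMap (∑' n : ℕ, ((n.factorial : ℝ)⁻¹) • M ^ n) := rfl
  rw [hL, ContinuousLinearMap.map_tsum _ (by exact hsum)]
  have : ∀ n : ℕ, (φ ∘ₗ (WithLp.linearEquiv 2 ℝ (Fin 2 → ℝ)).symm.toLinearMap ∘ₗ mulVecL x).toContinuousLinearMap (((n.factorial : ℝ)⁻¹) • M ^ n)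
      = ((n.factorial : ℝ)⁻¹ * r ^ n) * φ (WithLp.toLp 2 x) := by
    intro n
    have e1 : (φ ∘ₗ (WithLp.linearEquiv 2 ℝ (Fin 2 → ℝ)).symm.toLinearMap ∘ₗ mulVecL x).toContinuousLinearMap (((n.factorial : ℝ)⁻¹) • M ^ n)
        = (n.factorial : ℝ)⁻¹ • ((φ ∘ₗ (WithLp.linearEquiv 2 ℝ (Fin 2 → ℝ)).symm.toLinearMap ∘ₗ mulVecL x) (M ^ n)) := map_smul _ _ _
    have e2 : (φ ∘ₗ (WithLp.linearEquiv 2 ℝ (Fin 2 → ℝ)).symm.toLinearMap ∘ₗ mulVecL x) (M ^ n) = φ (WithLp.toLp 2 ((M ^ n).mulVec x)) := rfl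
    rw [e1, e2, pow_left_eig M x φ r h n, smul_eq_mul]
    ring
  simp_rw [this]
  rw [tsum_mul_right]
  congr 1
  rw [Real.exp_eq_exp_ℝ, NormedSpace.exp_eq_tsum ℝ]
  simp [smul_eq_mul]

end helpersNormed

lemma exp_mulVec_eig (M : Matrix (Fin 2) (Fin 2) ℝ) (x : Fin 2 → ℝ) (r : ℝ)
    (h : M.mulVec x = r • x) :
    (NormedSpace.exp M).mulVec x = Real.exp r • x :=
  exp_mulVec_eig' M x r h

lemma exp_left_eig (M : Matrix (Fin 2) (Fin 2) ℝ) (x : Fin 2 → ℝ)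
    (φ : EuclideanSpace ℝ (Fin 2) →ₗ[ℝ] ℝ) (r : ℝ)
    (h : ∀ y, φ (WithLp.toLp 2 (M.mulVec y)) = r * φ (WithLp.toLp 2 y)) :
    φ (WithLp.toLp 2 ((NormedSpace.exp M).mulVec x)) = Real.exp r * φ (WithLp.toLp 2 x) :=
  exp_left_eig' M x φ r h

/-- a linear functional on the plane, given by its coefficients. -/
def lf (u v : ℝ) : EuclideanSpace ℝ (Fin 2) →ₗ[ℝ] ℝ where
  toFun x := u * x 0 + v * x 1
  map_add' x y := by simp [PiLp.add_apply]; ring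
  map_smul' c x := by simp [PiLp.smul_apply, smul_eq_mul]; ring

lemma lf_apply (u v : ℝ) (x : EuclideanSpace ℝ (Fin 2)) : lf u v x = u * x 0 + v * x 1 := rfl

lemma finrank_ker_eq_one (f : EuclideanSpace ℝ (Fin 2) →ₗ[ℝ] ℝ)
    (v : EuclideanSpace ℝ (Fin 2)) (hv : f v ≠ 0) :
    Module.finrank ℝ (LinearMap.ker f) = 1 := by
  have h := LinearMap.finrank_range_add_finrank_ker f
  rw [finrank_euclideanSpace_fin] at h
  have hle : Module.finrank ℝ (LinearMap.range f) ≤ 1 := by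
    simpa using Submodule.finrank_le (LinearMap.range f)
  have hne : Module.finrank ℝ (LinearMap.range f) ≠ 0 := by
    intro h0
    have : LinearMap.range f = ⊥ := Submodule.finrank_eq_zero.mp h0
    exact hv (by simpa [this] using LinearMap.mem_range_self f v)
  omega

set_option maxHeartbeats 1000000 in
theorem stmt_14 (a b τ : ℝ) (hab : a * b < 0) (hτ : 0 < τ) :
    ∃ BS BA : Submodule ℝ (EuclideanSpace ℝ (Fin 2)),
      (↑BS = {x : EuclideanSpace ℝ (Fin 2) |
        IsBounded (discOrbit !![1, -τ * b; τ * a, 1 - τ ^ 2 * a * b] x)}) ∧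
      Module.finrank ℝ BS = 1 ∧
      (↑BA = {x : EuclideanSpace ℝ (Fin 2) | IsBounded (contOrbit !![0, -b; a, 0] x)}) ∧
      Module.finrank ℝ BA = Module.finrank ℝ BS := by
  have hb : b ≠ 0 := by rintro rfl; simp at hab
  have ha : a ≠ 0 := by rintro rfl; simp at hab
  have hτb : τ * b ≠ 0 := mul_ne_zero hτ.ne' hb
  -- discrete eigenvalue data
  set T : ℝ := 2 - τ ^ 2 * (a * b) with hTdef
  have hT : 2 < T := by nlinarith [sq_nonneg τ, mul_pos hτ hτ]
  set D : ℝ := Real.sqrt (T ^ 2 - 4) with hDdef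
  have hD2 : D ^ 2 = T ^ 2 - 4 := Real.sq_sqrt (by nlinarith)
  have hD0 : 0 < D := Real.sqrt_pos.2 (by nlinarith)
  set l1 : ℝ := (T + D) / 2 with hl1def
  set l2 : ℝ := (T - D) / 2 with hl2def
  have hsum : l1 + l2 = 2 - τ ^ 2 * (a * b) := by rw [hl1def, hl2def]; ring
  have hprod : l1 * l2 = 1 := by rw [hl1def, hl2def]; nlinarith [hD2]
  have hl1 : 1 < l1 := by nlinarith
  have hl2pos : 0 < l2 := by nlinarith
  have hl2le : l2 ≤ 1 := by nlinarith
  have hchar : l2 ^ 2 - T * l2 + 1 = 0 := by rw [hl2def]; nlinarith [hD2]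
  clear_value D
  clear_value l1 l2
  set S : Matrix (Fin 2) (Fin 2) ℝ := !![1, -τ * b; τ * a, 1 - τ ^ 2 * a * b] with hSdef
  set ψ : EuclideanSpace ℝ (Fin 2) →ₗ[ℝ] ℝ := lf (1 - l2) (-(τ * b)) with hψdef
  have hmv : ∀ y : Fin 2 → ℝ, S.mulVec y
      = ![y 0 - τ * b * y 1, τ * a * y 0 + (1 - τ ^ 2 * a * b) * y 1] := by
    intro y
    funext i
    fin_cases i <;>
      simp [hSdef, Matrix.mulVec, dotProduct, Fin.sum_univ_two] <;> ring
  -- ψ is a left eigenvector of S with eigenvalue l1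
  have hψS : ∀ y : Fin 2 → ℝ, ψ (WithLp.toLp 2 (S.mulVec y)) = l1 * ψ (WithLp.toLp 2 y) := by
    intro y
    rw [hmv y]
    show (1 - l2) * (y 0 - τ * b * y 1) + (-(τ * b)) * (τ * a * y 0 + (1 - τ ^ 2 * a * b) * y 1)
      = l1 * ((1 - l2) * y 0 + (-(τ * b)) * y 1)
    linear_combination (y 0) * hprod + (τ * b * y 1 - y 0) * hsum
  -- if ψ x = 0 then x is an eigenvector of S with eigenvalue l2
  have hψv : ∀ x : EuclideanSpace ℝ (Fin 2), ψ x = 0 → S.mulVec x = l2 • (x : Fin 2 → ℝ) := by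
    intro x hx
    rw [lf_apply] at hx
    rw [hmv x]
    funext i
    fin_cases i
    · show x 0 - τ * b * x 1 = l2 * x 0
      linear_combination hx
    · show τ * a * x 0 + (1 - τ ^ 2 * a * b) * x 1 = l2 * x 1
      have hE : τ * b * (τ * a * x 0 + (1 - τ ^ 2 * a * b) * x 1 - l2 * x 1) = 0 := by
        linear_combination (-(1 - τ ^ 2 * a * b - l2)) * hx + (x 0) * hchar
      rcases mul_eq_zero.mp hE with h | h
      · exact absurd h hτb
      · linarith
  -- continuous eigenvalue data
  set μ : ℝ := Real.sqrt (-(a * b)) with hμdef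
  have hμ0 : 0 < μ := Real.sqrt_pos.2 (by linarith)
  have hμ2 : μ ^ 2 = -(a * b) := Real.sq_sqrt (by linarith)
  clear_value μ
  set A : Matrix (Fin 2) (Fin 2) ℝ := !![0, -b; a, 0] with hAdef
  set φ : EuclideanSpace ℝ (Fin 2) →ₗ[ℝ] ℝ := lf μ (-b) with hφdef
  have hmvA : ∀ y : Fin 2 → ℝ, A.mulVec y = ![-b * y 1, a * y 0] := by
    intro y
    funext i
    fin_cases i <;>
      simp [hAdef, Matrix.mulVec, dotProduct, Fin.sum_univ_two] <;> ring
  have hφA : ∀ y : Fin 2 → ℝ, φ (WithLp.toLp 2 (A.mulVec y)) = μ * φ (WithLp.toLp 2 y) := by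
    intro y
    rw [hmvA y]
    show μ * (-b * y 1) + (-b) * (a * y 0) = μ * (μ * y 0 + (-b) * y 1)
    linear_combination (-(y 0)) * hμ2
  have hφv : ∀ x : EuclideanSpace ℝ (Fin 2), φ x = 0 → A.mulVec x = (-μ) • (x : Fin 2 → ℝ) := by
    intro x hx
    rw [lf_apply] at hx
    rw [hmvA x]
    funext i
    fin_cases i
    · show -b * x 1 = -μ * x 0
      linear_combination hx
    · show a * x 0 = -μ * x 1
      have hE : μ * (a * x 0 + μ * x 1) = 0 := by
        linear_combination a * hx + (x 1) * hμ2
      rcases mul_eq_zero.mp hE with h | h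
      · exact absurd h hμ0.ne'
      · linarith
  refine ⟨LinearMap.ker ψ, LinearMap.ker φ, ?_, ?_, ?_, ?_⟩
  · -- BS set equality
    ext x
    simp only [SetLike.mem_coe, LinearMap.mem_ker, Set.mem_setOf_eq]
    constructor
    · intro hx
      apply isBounded_iff_forall_norm_le.2 ⟨‖x‖, ?_⟩
      rintro y ⟨n, hn⟩
      have h1 : y = (l2 ^ n : ℝ) • x :=
        WithLp.ofLp_injective 2 (by rw [hn, pow_mulVec_eig S x l2 (hψv x hx) n]; rfl)
      rw [h1, norm_smul]
      have hle1 : ‖(l2 ^ n : ℝ)‖ ≤ 1 := by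
        rw [Real.norm_eq_abs, abs_of_nonneg (pow_nonneg hl2pos.le n)]
        exact pow_le_one₀ hl2pos.le hl2le
      calc ‖(l2 ^ n : ℝ)‖ * ‖x‖ ≤ 1 * ‖x‖ :=
            mul_le_mul_of_nonneg_right hle1 (norm_nonneg x)
        _ = ‖x‖ := one_mul _
    · intro hx
      by_contra hψx
      have him : IsBounded ((LinearMap.toContinuousLinearMap ψ) '' discOrbit S x) :=
        ((LinearMap.toContinuousLinearMap ψ).lipschitz).isBounded_image hx
      obtain ⟨R, hR⟩ := isBounded_iff_forall_norm_le.1 him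
      have hbound : ∀ n : ℕ, l1 ^ n * |ψ x| ≤ R := by
        intro n
        have hmem : ψ (WithLp.toLp 2 ((S ^ n).mulVec x)) ∈ (LinearMap.toContinuousLinearMap ψ) '' discOrbit S x :=
          ⟨WithLp.toLp 2 ((S ^ n).mulVec x), ⟨n, rfl⟩, rfl⟩
        have hthis := hR _ hmem
        rw [Real.norm_eq_abs, pow_left_eig S x ψ l1 hψS n, abs_mul,
          abs_of_nonneg (pow_nonneg (by linarith : (0:ℝ) ≤ l1) n)] at hthis
        exact hthis
      obtain ⟨n, hn⟩ := pow_unbounded_of_one_lt (R / |ψ x|) hl1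
      have hψx' : 0 < |ψ x| := abs_pos.2 hψx
      have : R < l1 ^ n * |ψ x| := by
        rw [div_lt_iff₀ hψx'] at hn
        linarith
      linarith [hbound n]
  · exact finrank_ker_eq_one ψ !₂[0, 1] (by rw [lf_apply]; simp [hτ.ne', hb])
  · -- BA set equality
    ext x
    simp only [SetLike.mem_coe, LinearMap.mem_ker, Set.mem_setOf_eq]
    constructor
    · intro hx
      apply isBounded_iff_forall_norm_le.2 ⟨‖x‖, ?_⟩
      rintro y ⟨t, ht, hy⟩
      have h0 : (t • A).mulVec x = (t * (-μ)) • (x : Fin 2 → ℝ) := by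
        rw [Matrix.smul_mulVec, hφv x hx, smul_smul]
      have h1 : y
          = Real.exp (t * (-μ)) • x :=
        WithLp.ofLp_injective 2 (by rw [hy, exp_mulVec_eig (t • A) x (t * (-μ)) h0]; rfl)
      rw [h1, norm_smul]
      have hle1 : ‖Real.exp (t * (-μ))‖ ≤ 1 := by
        rw [Real.norm_eq_abs, abs_of_pos (Real.exp_pos _)]
        exact Real.exp_le_one_iff.2 (by nlinarith)
      calc ‖Real.exp (t * (-μ))‖ * ‖x‖ ≤ 1 * ‖x‖ :=
            mul_le_mul_of_nonneg_right hle1 (norm_nonneg x)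
        _ = ‖x‖ := one_mul _
    · intro hx
      by_contra hφx
      have him : IsBounded ((LinearMap.toContinuousLinearMap φ) '' contOrbit A x) :=
        ((LinearMap.toContinuousLinearMap φ).lipschitz).isBounded_image hx
      obtain ⟨R, hR⟩ := isBounded_iff_forall_norm_le.1 him
      have hbound : ∀ t : ℝ, 0 ≤ t → Real.exp (t * μ) * |φ x| ≤ R := by
        intro t ht
        have hleft : ∀ y : Fin 2 → ℝ, φ (WithLp.toLp 2 ((t • A).mulVec y)) = (t * μ) * φ (WithLp.toLp 2 y) := by
          intro y
          rw [Matrix.smul_mulVec]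
          have hs : φ (WithLp.toLp 2 (t • (A.mulVec y))) = t * φ (WithLp.toLp 2 (A.mulVec y)) := by
            rw [WithLp.toLp_smul, _root_.map_smul, smul_eq_mul]
          rw [hs, hφA y]; ring
        have hmem : φ (WithLp.toLp 2 ((NormedSpace.exp (t • A)).mulVec x))
            ∈ (LinearMap.toContinuousLinearMap φ) '' contOrbit A x :=
          ⟨WithLp.toLp 2 ((NormedSpace.exp (t • A)).mulVec x), ⟨t, ht, rfl⟩, rfl⟩
        have hthis := hR _ hmem
        rw [Real.norm_eq_abs, exp_left_eig (t • A) x φ (t * μ) hleft, abs_mul,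
          abs_of_pos (Real.exp_pos _)] at hthis
        exact hthis
      have hφx' : 0 < |φ x| := abs_pos.2 hφx
      set t : ℝ := max 0 (R / |φ x| / μ) with htdef
      have ht0 : 0 ≤ t := le_max_left _ _
      have htμ : R / |φ x| ≤ t * μ := by
        have h1 : R / |φ x| / μ ≤ t := le_max_right _ _
        calc R / |φ x| = (R / |φ x| / μ) * μ := (div_mul_cancel₀ _ hμ0.ne').symm
          _ ≤ t * μ := by gcongr
      have hexp : R / |φ x| < Real.exp (t * μ) := by
        have := Real.add_one_le_exp (t * μ)
        linarith
      have hRlt : R < Real.exp (t * μ) * |φ x| := by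
        calc R = R / |φ x| * |φ x| := (div_mul_cancel₀ _ hφx'.ne').symm
          _ < Real.exp (t * μ) * |φ x| := mul_lt_mul_of_pos_right hexp hφx'
      linarith [hbound t ht0]
  · rw [finrank_ker_eq_one φ !₂[0, 1] (by rw [lf_apply]; simp [hb]),
      finrank_ker_eq_one ψ !₂[0, 1] (by rw [lf_apply]; simp [hτ.ne', hb])]
end

section
/- Let c ∈ ℝ with c < 0 and let 0 < τ < 2/√(−c). Let S(τ) be the 2×2 real matrix with rows (1 + τ²c/2, τc(1 + τ²c/4)) and (τ, 1 + τ²c/2), obtained by applying the Störmer–Verlet scheme with step size τ to the linear system p' = c q, q' = p. Then det S(τ) = 1, |trace S(τ)| = |2 + τ²c| < 2, and for every x ∈ ℝ² the set {S(τ)ⁿ·x : n ∈ ℕ} is bounded. -/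
open Matrix Bornology

theorem stmt_15 (c τ : ℝ) (hc : c < 0) (hτ0 : 0 < τ) (hτ : τ < 2 / Real.sqrt (-c)) :
    (!![1 + τ ^ 2 * c / 2, τ * c * (1 + τ ^ 2 * c / 4); τ, 1 + τ ^ 2 * c / 2] :
        Matrix (Fin 2) (Fin 2) ℝ).det = 1 ∧
    |(!![1 + τ ^ 2 * c / 2, τ * c * (1 + τ ^ 2 * c / 4); τ, 1 + τ ^ 2 * c / 2] :
        Matrix (Fin 2) (Fin 2) ℝ).trace| = |2 + τ ^ 2 * c| ∧
    |2 + τ ^ 2 * c| < 2 ∧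
    ∀ x : EuclideanSpace ℝ (Fin 2),
      IsBounded (discOrbit
        !![1 + τ ^ 2 * c / 2, τ * c * (1 + τ ^ 2 * c / 4); τ, 1 + τ ^ 2 * c / 2] x) := by
  have hnc : 0 < -c := by linarith
  have hs : 0 < Real.sqrt (-c) := Real.sqrt_pos.mpr hnc
  have hτs : τ * Real.sqrt (-c) < 2 := by
    rw [div_eq_mul_inv] at hτ
    calc τ * Real.sqrt (-c) < 2 * (Real.sqrt (-c))⁻¹ * Real.sqrt (-c) := by
          exact mul_lt_mul_of_pos_right hτ hs
      _ = 2 := by field_simp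
  have hsq : τ ^ 2 * (-c) < 4 := by
    have h1 : (τ * Real.sqrt (-c)) ^ 2 < 4 := by
      nlinarith [mul_pos hτ0 hs]
    have h2 : (τ * Real.sqrt (-c)) ^ 2 = τ ^ 2 * (-c) := by
      rw [mul_pow, Real.sq_sqrt hnc.le]
    linarith [h2 ▸ h1]
  -- key positivity facts
  have h4 : 0 < 1 + τ ^ 2 * c / 4 := by nlinarith
  set b : ℝ := τ * c * (1 + τ ^ 2 * c / 4) with hb
  have hbneg : 0 < -b := by
    have : b < 0 := by
      apply mul_neg_of_neg_of_pos _ h4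
      exact mul_neg_of_pos_of_neg hτ0 hc
    linarith
  refine ⟨?_, ?_, ?_, ?_⟩
  · simp [Matrix.det_fin_two_of]; ring
  · rw [Matrix.trace_fin_two_of]; congr 1; ring
  · rw [abs_lt]; constructor <;> nlinarith
  · intro x
    set S : Matrix (Fin 2) (Fin 2) ℝ :=
      !![1 + τ ^ 2 * c / 2, τ * c * (1 + τ ^ 2 * c / 4); τ, 1 + τ ^ 2 * c / 2] with hS
    -- invariant quadratic form
    have step : ∀ y : Fin 2 → ℝ,
        τ * (S.mulVec y 0) ^ 2 - b * (S.mulVec y 1) ^ 2 = τ * (y 0) ^ 2 - b * (y 1) ^ 2 := by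
      intro y
      have h0 : S.mulVec y 0 = (1 + τ ^ 2 * c / 2) * y 0 + b * y 1 := by
        simp [hS, hb, Matrix.mulVec, dotProduct, Fin.sum_univ_two]
      have h1 : S.mulVec y 1 = τ * y 0 + (1 + τ ^ 2 * c / 2) * y 1 := by
        simp [hS, Matrix.mulVec, dotProduct, Fin.sum_univ_two]
      rw [h0, h1, hb]; ring
    have inv : ∀ n : ℕ, ∀ y : Fin 2 → ℝ,
        τ * ((S ^ n).mulVec x 0) ^ 2 - b * ((S ^ n).mulVec x 1) ^ 2
          = τ * (x 0) ^ 2 - b * (x 1) ^ 2 := by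
      intro n
      induction n with
      | zero => simp [Matrix.one_mulVec]
      | succ n ih =>
        intro y
        have : (S ^ (n + 1)).mulVec x = S.mulVec ((S ^ n).mulVec x) := by
          rw [pow_succ']
          rw [← Matrix.mulVec_mulVec]
        rw [this, step]
        exact ih y
    set K : ℝ := τ * (x 0) ^ 2 - b * (x 1) ^ 2 with hK
    have hK0 : 0 ≤ K := by
      have := sq_nonneg (x 0); have := sq_nonneg (x 1); nlinarith
    rw [isBounded_iff_forall_norm_le]
    refine ⟨Real.sqrt (K / τ + K / (-b)), ?_⟩
    rintro y ⟨n, hy⟩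
    have hinv := inv n x
    have hy0 : ((S ^ n).mulVec x 0) ^ 2 ≤ K / τ := by
      rw [le_div_iff₀ hτ0]
      nlinarith [sq_nonneg ((S ^ n).mulVec x 1)]
    have hy1 : ((S ^ n).mulVec x 1) ^ 2 ≤ K / (-b) := by
      rw [le_div_iff₀ hbneg]
      nlinarith [sq_nonneg ((S ^ n).mulVec x 0)]
    rw [EuclideanSpace.norm_eq]
    apply Real.sqrt_le_sqrt
    rw [Fin.sum_univ_two]
    rw [hy]
    have e0 : ‖(S ^ n).mulVec x 0‖ ^ 2 = ((S ^ n).mulVec x 0) ^ 2 := sq_abs _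
    have e1 : ‖(S ^ n).mulVec x 1‖ ^ 2 = ((S ^ n).mulVec x 1) ^ 2 := sq_abs _
    rw [e0, e1]
    linarith
end

section
/- Let c ∈ ℝ with c < 0 and let τ > 2/√(−c). Let S(τ) be the 2×2 real matrix with rows (1 + τ²c/2, τc(1 + τ²c/4)) and (τ, 1 + τ²c/2). Then trace S(τ) < −2 and there exists x ∈ ℝ² such that the set {S(τ)ⁿ·x : n ∈ ℕ} is unbounded, even though for the matrix A with rows (0, c) and (1, 0) every positive semi-orbit {exp(tA)·x : t ≥ 0} is bounded. -/
open Matrix Bornology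

section ExpFormula

attribute [local instance] Matrix.linftyOpNormedAddCommGroup Matrix.linftyOpNormedRing
  Matrix.linftyOpNormedAlgebra

/-- The embedding of `ℂ` into 2×2 real matrices adapted to frequency `ω`. -/
noncomputable def phiAux (ω : ℝ) (hω : ω ≠ 0) : ℂ →ₐ[ℝ] Matrix (Fin 2) (Fin 2) ℝ where
  toFun z := !![z.re, -ω * z.im; z.im / ω, z.re]
  map_one' := by
    ext i j
    fin_cases i <;> fin_cases j <;> simp [Matrix.one_apply]
  map_mul' z w := by
    ext i j
    rw [Matrix.mul_fin_two]
    fin_cases i <;> fin_cases j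
    all_goals (try simp [Complex.mul_re, Complex.mul_im])
    all_goals (try field_simp)
    all_goals (try ring)
  map_zero' := by
    ext i j
    fin_cases i <;> fin_cases j <;> simp
  map_add' z w := by
    ext i j
    fin_cases i <;> fin_cases j
    all_goals (try simp)
    all_goals (try ring)
  commutes' r := by
    ext i j
    fin_cases i <;> fin_cases j <;>
      simp [Matrix.algebraMap_eq_diagonal, Matrix.diagonal]

lemma phiAux_continuous (ω : ℝ) (hω : ω ≠ 0) : Continuous (phiAux ω hω) :=
  (phiAux ω hω).toLinearMap.continuous_of_finiteDimensional

lemma exp_formula (ω : ℝ) (hω : ω ≠ 0) (t : ℝ) :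
    NormedSpace.exp (t • (!![0, -ω ^ 2; 1, 0] : Matrix (Fin 2) (Fin 2) ℝ)) =
      !![Real.cos (t * ω), -ω * Real.sin (t * ω);
         Real.sin (t * ω) / ω, Real.cos (t * ω)] := by
  have h1 : t • (!![0, -ω ^ 2; 1, 0] : Matrix (Fin 2) (Fin 2) ℝ) =
      phiAux ω hω (↑(t * ω) * Complex.I) := by
    ext i j
    fin_cases i <;> fin_cases j
    all_goals (try simp [phiAux])
    all_goals (try field_simp)
    all_goals (try ring)
  rw [h1]
  refine (NormedSpace.map_exp (phiAux ω hω) (phiAux_continuous ω hω) _).symm.trans ?_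
  have h2 : NormedSpace.exp (↑(t * ω) * Complex.I) = Complex.exp (↑(t * ω) * Complex.I) := by
    rw [Complex.exp_eq_exp_ℂ]
  rw [h2]
  have hre : (Complex.exp (↑t * ↑ω * Complex.I)).re = Real.cos (t * ω) := by
    rw [← Complex.ofReal_mul]; exact Complex.exp_ofReal_mul_I_re _
  have him : (Complex.exp (↑t * ↑ω * Complex.I)).im = Real.sin (t * ω) := by
    rw [← Complex.ofReal_mul]; exact Complex.exp_ofReal_mul_I_im _
  ext i j
  fin_cases i <;> fin_cases j
  all_goals (try simp [phiAux, hre, him])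

end ExpFormula

theorem stmt_16 (c τ : ℝ) (hc : c < 0) (hτ : 2 / Real.sqrt (-c) < τ) :
    (!![1 + τ ^ 2 * c / 2, τ * c * (1 + τ ^ 2 * c / 4); τ, 1 + τ ^ 2 * c / 2] :
        Matrix (Fin 2) (Fin 2) ℝ).trace < -2 ∧
    (∃ x : EuclideanSpace ℝ (Fin 2),
      ¬ IsBounded (discOrbit
        !![1 + τ ^ 2 * c / 2, τ * c * (1 + τ ^ 2 * c / 4); τ, 1 + τ ^ 2 * c / 2] x)) ∧
    (∀ x : EuclideanSpace ℝ (Fin 2), IsBounded (contOrbit !![0, c; 1, 0] x)) := by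
  have hω : (0 : ℝ) < Real.sqrt (-c) := Real.sqrt_pos.mpr (by linarith)
  set ω : ℝ := Real.sqrt (-c) with hωdef
  have hω2 : ω ^ 2 = -c := Real.sq_sqrt (by linarith)
  have hτ0 : 0 < τ := lt_trans (div_pos two_pos hω) hτ
  have hτω : 2 < τ * ω := by rwa [div_lt_iff₀ hω] at hτ
  have hkey : τ ^ 2 * c < -4 := by nlinarith
  refine ⟨?_, ?_, ?_⟩
  · rw [Matrix.trace_fin_two_of]
    linarith
  · -- discrete orbit unbounded
    set a : ℝ := 1 + τ ^ 2 * c / 2 with hadef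
    set b : ℝ := τ * c * (1 + τ ^ 2 * c / 4) with hbdef
    have ha : a < -1 := by rw [hadef]; linarith
    have ha1 : 1 < a ^ 2 := by nlinarith
    set s : ℝ := Real.sqrt (a ^ 2 - 1) with hsdef
    have hs2 : s ^ 2 = a ^ 2 - 1 := Real.sq_sqrt (by linarith)
    have hs0 : 0 < s := Real.sqrt_pos.mpr (by linarith)
    set lam : ℝ := a - s with hlamdef
    have hlam : lam < -1 := by rw [hlamdef]; linarith
    have hdet : τ * b = a ^ 2 - 1 := by rw [hadef, hbdef]; ring
    set S : Matrix (Fin 2) (Fin 2) ℝ := !![a, b; τ, a] with hSdef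
    set v : EuclideanSpace ℝ (Fin 2) := !₂[b, -s] with hvdef
    have hSv : S.mulVec v = lam • (v : Fin 2 → ℝ) := by
      funext i
      fin_cases i <;>
        simp [hSdef, hvdef, Matrix.mulVec, dotProduct, Fin.sum_univ_two, hlamdef]
      · ring
      · nlinarith [hdet, hs2]
    have hpow : ∀ n : ℕ, (S ^ n).mulVec v = lam ^ n • (v : Fin 2 → ℝ) := by
      intro n
      induction n with
      | zero => simp [Matrix.one_mulVec]
      | succ n ih =>
        rw [pow_succ, ← Matrix.mulVec_mulVec, hSv, Matrix.mulVec_smul, ih,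
          smul_smul, pow_succ]
        congr 1
        ring
    refine ⟨v, ?_⟩
    intro hb2
    rw [isBounded_iff_forall_norm_le] at hb2
    obtain ⟨C, hC⟩ := hb2
    have hv0 : v ≠ 0 := by
      intro h
      have h1 : v 1 = 0 := by rw [h]; rfl
      rw [hvdef] at h1
      simp at h1
      linarith
    have hvn : 0 < ‖v‖ := norm_pos_iff.mpr hv0
    have hlam1 : 1 < |lam| := by
      calc (1 : ℝ) < -lam := by linarith
      _ ≤ |lam| := neg_le_abs lam
    obtain ⟨n, hn⟩ := pow_unbounded_of_one_lt (C / ‖v‖) hlam1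
    have hmem : (lam ^ n • v : EuclideanSpace ℝ (Fin 2)) ∈ discOrbit S v :=
      ⟨n, (hpow n).symm⟩
    have h1 := hC _ hmem
    rw [norm_smul, Real.norm_eq_abs, abs_pow] at h1
    rw [div_lt_iff₀ hvn] at hn
    linarith
  · -- continuous orbits bounded
    clear hτ hτω hkey hτ0
    intro x
    have hA : (!![0, c; 1, 0] : Matrix (Fin 2) (Fin 2) ℝ) = !![0, -ω ^ 2; 1, 0] := by
      rw [hω2]; norm_num
    rw [isBounded_iff_forall_norm_le]
    set X0 : ℝ := |x 0| with hX0
    set X1 : ℝ := |x 1| with hX1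
    refine ⟨Real.sqrt ((X0 + ω * X1) ^ 2 + (X0 / ω + X1) ^ 2), ?_⟩
    rintro y ⟨t, ht, hy⟩
    rw [hA, exp_formula ω (ne_of_gt hω) t] at hy
    set M : Matrix (Fin 2) (Fin 2) ℝ :=
      !![Real.cos (t * ω), -ω * Real.sin (t * ω);
         Real.sin (t * ω) / ω, Real.cos (t * ω)] with hM
    have hcos := Real.abs_cos_le_one (t * ω)
    have hsin := Real.abs_sin_le_one (t * ω)
    have h0 : |(M.mulVec x) 0| ≤ X0 + ω * X1 := by
      have he : (M.mulVec x) 0 = Real.cos (t * ω) * x 0 + -ω * Real.sin (t * ω) * x 1 := by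
        simp [hM, Matrix.mulVec, dotProduct, Fin.sum_univ_two]
      rw [he]
      have c1 : |Real.cos (t * ω) * x 0| ≤ X0 := by
        rw [abs_mul, hX0]
        exact mul_le_of_le_one_left (abs_nonneg _) hcos
      have c2 : |-ω * Real.sin (t * ω) * x 1| ≤ ω * X1 := by
        rw [abs_mul, abs_mul, abs_neg, abs_of_pos hω, hX1]
        have := mul_le_of_le_one_right (le_of_lt hω) hsin
        exact mul_le_mul_of_nonneg_right (this.trans_eq rfl) (abs_nonneg _) |>.trans
          (le_of_eq rfl)
      calc |Real.cos (t * ω) * x 0 + -ω * Real.sin (t * ω) * x 1|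
          ≤ |Real.cos (t * ω) * x 0| + |-ω * Real.sin (t * ω) * x 1| := abs_add_le _ _
        _ ≤ X0 + ω * X1 := add_le_add c1 c2
    have h1 : |(M.mulVec x) 1| ≤ X0 / ω + X1 := by
      have he : (M.mulVec x) 1 = Real.sin (t * ω) / ω * x 0 + Real.cos (t * ω) * x 1 := by
        simp [hM, Matrix.mulVec, dotProduct, Fin.sum_univ_two]
      rw [he]
      have c1 : |Real.sin (t * ω) / ω * x 0| ≤ X0 / ω := by
        rw [abs_mul, abs_div, abs_of_pos hω, hX0, div_mul_eq_mul_div, div_le_div_iff_of_pos_right hω]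
        exact mul_le_of_le_one_left (abs_nonneg _) hsin
      have c2 : |Real.cos (t * ω) * x 1| ≤ X1 := by
        rw [abs_mul, hX1]
        exact mul_le_of_le_one_left (abs_nonneg _) hcos
      calc |Real.sin (t * ω) / ω * x 0 + Real.cos (t * ω) * x 1|
          ≤ |Real.sin (t * ω) / ω * x 0| + |Real.cos (t * ω) * x 1| := abs_add_le _ _
        _ ≤ X0 / ω + X1 := add_le_add c1 c2
    rw [EuclideanSpace.norm_eq, hy]
    apply Real.sqrt_le_sqrt
    rw [Fin.sum_univ_two]
    have e0 : ‖(M.mulVec x) 0‖ ^ 2 ≤ (X0 + ω * X1) ^ 2 := by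
      rw [Real.norm_eq_abs]
      apply pow_le_pow_left₀ (abs_nonneg _) h0
    have e1 : ‖(M.mulVec x) 1‖ ^ 2 ≤ (X0 / ω + X1) ^ 2 := by
      rw [Real.norm_eq_abs]
      apply pow_le_pow_left₀ (abs_nonneg _) h1
    linarith
end

section
/- Let c ∈ ℝ with c > 0 and let τ > 0. Let S(τ) be the 2×2 real matrix with rows (1 + τ²c/2, τc(1 + τ²c/4)) and (τ, 1 + τ²c/2). Then trace S(τ) > 2, det S(τ) = 1, and the set {x ∈ ℝ² : {S(τ)ⁿ·x : n ∈ ℕ} is bounded} is a linear subspace of ℝ² of dimension 1, the same as the dimension of {x ∈ ℝ² : {exp(tA)·x : t ≥ 0} is bounded} for the matrix A with rows (0, c) and (1, 0). -/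
open Matrix Bornology

attribute [local instance] Matrix.linftyOpNormedAddCommGroup Matrix.linftyOpNormedRing
  Matrix.linftyOpNormedAlgebra

noncomputable def mulVecCLM (u : Fin 2 → ℝ) : Matrix (Fin 2) (Fin 2) ℝ →L[ℝ] (Fin 2 → ℝ) :=
  LinearMap.toContinuousLinearMap
    { toFun := fun M => M.mulVec u
      map_add' := fun M N => Matrix.add_mulVec M N u
      map_smul' := fun a M => by simp [Matrix.smul_mulVec] }

lemma pow_eigen (M : Matrix (Fin 2) (Fin 2) ℝ) (u : Fin 2 → ℝ) (μ : ℝ)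
    (h : M.mulVec u = μ • u) (n : ℕ) : (M ^ n).mulVec u = μ ^ n • u := by
  induction n with
  | zero => simp
  | succ n ih =>
    rw [pow_succ, ← Matrix.mulVec_mulVec, h, Matrix.mulVec_smul, ih, smul_smul, pow_succ,
      mul_comm]

lemma exp_eigen (M : Matrix (Fin 2) (Fin 2) ℝ) (u : Fin 2 → ℝ) (μ : ℝ)
    (h : M.mulVec u = μ • u) :
    (NormedSpace.exp M).mulVec u = Real.exp μ • u := by
  have hsum : Summable fun n : ℕ => (n.factorial : ℝ)⁻¹ * μ ^ n := by
    simpa [smul_eq_mul] using NormedSpace.expSeries_summable' (𝕂 := ℝ) μ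
  have key : mulVecCLM u (NormedSpace.exp M) = Real.exp μ • u := by
    rw [NormedSpace.exp_eq_tsum (𝕂 := ℝ)]
    rw [(mulVecCLM u).map_tsum (NormedSpace.expSeries_summable' (𝕂 := ℝ) M)]
    have h2 : ∀ n : ℕ, mulVecCLM u ((n.factorial : ℝ)⁻¹ • M ^ n)
        = ((n.factorial : ℝ)⁻¹ * μ ^ n) • u := by
      intro n
      rw [(mulVecCLM u).map_smul]
      show (n.factorial : ℝ)⁻¹ • (M ^ n).mulVec u = _
      rw [pow_eigen M u μ h, smul_smul]
    rw [tsum_congr h2, hsum.tsum_smul_const]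
    congr 1
    rw [Real.exp_eq_exp_ℝ, NormedSpace.exp_eq_tsum (𝕂 := ℝ)]
    simp [smul_eq_mul]
  exact key

lemma abs_snd_le_norm (y : EuclideanSpace ℝ (Fin 2)) : |y 1| ≤ ‖y‖ := by
  rw [EuclideanSpace.norm_eq, Fin.sum_univ_two,
    show |y 1| = Real.sqrt (‖y 1‖^2) by rw [Real.sqrt_sq_eq_abs]; simp]
  apply Real.sqrt_le_sqrt
  nlinarith [sq_nonneg ‖y 0‖]

lemma orbit_bounded_iff {ι : Type*} (F : ι → Matrix (Fin 2) (Fin 2) ℝ) (P : ι → Prop)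
    (l m : ι → ℝ) (r : ℝ) (hr : 0 < r)
    (hv : ∀ i, P i → (F i).mulVec ![r, 1] = l i • ![r, 1])
    (hw : ∀ i, P i → (F i).mulVec ![-r, 1] = m i • ![-r, 1])
    (hm : ∀ i, P i → |m i| ≤ 1) (hl0 : ∀ i, P i → 0 ≤ l i)
    (hl : ∀ C : ℝ, ∃ i, P i ∧ C < l i) (x : EuclideanSpace ℝ (Fin 2)) :
    IsBounded {y : EuclideanSpace ℝ (Fin 2) | ∃ i, P i ∧ y = (F i).mulVec x} ↔
      x ∈ Submodule.span ℝ {(WithLp.toLp 2 ![-r, 1] : EuclideanSpace ℝ (Fin 2))} := by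
  set v : EuclideanSpace ℝ (Fin 2) := WithLp.toLp 2 ![r, 1] with hvdef
  set w : EuclideanSpace ℝ (Fin 2) := WithLp.toLp 2 ![-r, 1] with hwdef
  set a : ℝ := (x 0 / r + x 1) / 2 with hadef
  set b : ℝ := (x 1 - x 0 / r) / 2 with hbdef
  have hx : x = a • v + b • w := by
    ext i
    fin_cases i <;>
      simp [hvdef, hwdef, hadef, hbdef] <;> field_simp <;> ring
  have horb : ∀ i, P i → (WithLp.toLp 2 ((F i).mulVec x) : EuclideanSpace ℝ (Fin 2))
      = (a * l i) • v + (b * m i) • w := by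
    intro i hPi
    rw [hx]
    apply (WithLp.ofLp_injective 2)
    simp only [WithLp.ofLp_add, WithLp.ofLp_smul, Matrix.mulVec_add, Matrix.mulVec_smul, hvdef,
      hwdef, hv i hPi, hw i hPi, smul_smul]
  constructor
  · intro hb
    rw [isBounded_iff_forall_norm_le] at hb
    obtain ⟨C, hC⟩ := hb
    have ha0 : a = 0 := by
      by_contra ha
      obtain ⟨i, hPi, hi⟩ := hl ((C + |b|) / |a|)
      have hnorm := hC (WithLp.toLp 2 ((F i).mulVec x)) ⟨i, hPi, rfl⟩
      have h1 : (WithLp.toLp 2 ((F i).mulVec x) : EuclideanSpace ℝ (Fin 2)) 1 = a * l i + b * m i := by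
        rw [horb i hPi]
        simp [hvdef, hwdef]
      have h2 : |a * l i + b * m i| ≤ C := by
        rw [← h1]
        exact (abs_snd_le_norm _).trans hnorm
      have tri : |a * l i| - |-(b * m i)| ≤ |a * l i - -(b * m i)| :=
        abs_sub_abs_le_abs_sub _ _
      rw [sub_neg_eq_add, abs_neg] at tri
      have e1 : |a * l i| = |a| * l i := by
        rw [abs_mul, abs_of_nonneg (hl0 i hPi)]
      have e2 : |b * m i| ≤ |b| := by
        rw [abs_mul]
        nlinarith [hm i hPi, abs_nonneg b, abs_nonneg (m i)]
      have hi' : C + |b| < l i * |a| := (div_lt_iff₀ (abs_pos.2 ha)).1 hi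
      nlinarith
    rw [Submodule.mem_span_singleton]
    refine ⟨b, ?_⟩
    rw [hx, ha0]
    simp
  · intro hmem
    rw [Submodule.mem_span_singleton] at hmem
    obtain ⟨β, hβ⟩ := hmem
    rw [isBounded_iff_forall_norm_le]
    refine ⟨|β| * ‖w‖, ?_⟩
    rintro y ⟨i, hPi, hy⟩
    have h3 : y = (β * m i) • w := by
      apply (WithLp.ofLp_injective 2)
      rw [hy, ← hβ]
      simp only [WithLp.ofLp_smul, Matrix.mulVec_smul, hwdef, hw i hPi, smul_smul]
    rw [h3, norm_smul, Real.norm_eq_abs, abs_mul]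
    have h4 : |β| * |m i| ≤ |β| := by
      nlinarith [hm i hPi, abs_nonneg β, abs_nonneg (m i)]
    exact mul_le_mul_of_nonneg_right h4 (norm_nonneg w)

lemma w_ne_zero (r : ℝ) : (WithLp.toLp 2 ![-r, 1] : EuclideanSpace ℝ (Fin 2)) ≠ 0 := by
  intro h
  have := congrArg (fun z : EuclideanSpace ℝ (Fin 2) => z 1) h
  simp at this

theorem stmt_17 (c τ : ℝ) (hc : 0 < c) (hτ : 0 < τ) :
    (2 : ℝ) < (!![1 + τ ^ 2 * c / 2, τ * c * (1 + τ ^ 2 * c / 4); τ, 1 + τ ^ 2 * c / 2] :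
        Matrix (Fin 2) (Fin 2) ℝ).trace ∧
    (!![1 + τ ^ 2 * c / 2, τ * c * (1 + τ ^ 2 * c / 4); τ, 1 + τ ^ 2 * c / 2] :
        Matrix (Fin 2) (Fin 2) ℝ).det = 1 ∧
    ∃ BS BA : Submodule ℝ (EuclideanSpace ℝ (Fin 2)),
      (↑BS = {x : EuclideanSpace ℝ (Fin 2) |
        IsBounded (discOrbit
          !![1 + τ ^ 2 * c / 2, τ * c * (1 + τ ^ 2 * c / 4); τ, 1 + τ ^ 2 * c / 2] x)}) ∧
      Module.finrank ℝ BS = 1 ∧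
      (↑BA = {x : EuclideanSpace ℝ (Fin 2) | IsBounded (contOrbit !![0, c; 1, 0] x)}) ∧
      Module.finrank ℝ BA = 1 := by
  set S : Matrix (Fin 2) (Fin 2) ℝ :=
    !![1 + τ ^ 2 * c / 2, τ * c * (1 + τ ^ 2 * c / 4); τ, 1 + τ ^ 2 * c / 2] with hS
  refine ⟨?_, ?_, ?_⟩
  · rw [Matrix.trace_fin_two]
    simp [hS]
    nlinarith [mul_pos (pow_pos hτ 2) hc]
  · rw [hS, Matrix.det_fin_two_of]
    ring
  · -- discrete part
    have hq : (0:ℝ) < c * (1 + τ ^ 2 * c / 4) := by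
      nlinarith [mul_pos (pow_pos hτ 2) hc]
    set r : ℝ := Real.sqrt (c * (1 + τ ^ 2 * c / 4)) with hrdef
    have hr : 0 < r := Real.sqrt_pos.2 hq
    have hr2 : r ^ 2 = c * (1 + τ ^ 2 * c / 4) := Real.sq_sqrt hq.le
    set lam : ℝ := 1 + τ ^ 2 * c / 2 + τ * r with hlam
    set mu : ℝ := 1 + τ ^ 2 * c / 2 - τ * r with hmu
    have hev : S.mulVec ![r, 1] = lam • ![r, 1] := by
      funext i
      fin_cases i
      · simp [hS, Matrix.mulVec, dotProduct, Fin.sum_univ_two, hlam]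
        linear_combination (-τ) * hr2
      · simp [hS, Matrix.mulVec, dotProduct, Fin.sum_univ_two, hlam]
        try ring
    have hew : S.mulVec ![-r, 1] = mu • ![-r, 1] := by
      funext i
      fin_cases i
      · simp [hS, Matrix.mulVec, dotProduct, Fin.sum_univ_two, hmu]
        linear_combination (-τ) * hr2
      · simp [hS, Matrix.mulVec, dotProduct, Fin.sum_univ_two, hmu]
        try ring
    have hlm : lam * mu = 1 := by
      rw [hlam, hmu]
      linear_combination (-(τ^2)) * hr2
    have hlam1 : 1 < lam := by
      rw [hlam]; nlinarith [mul_pos (pow_pos hτ 2) hc, mul_pos hτ hr]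
    have hmu0 : 0 < mu := by nlinarith
    have hmu1 : mu ≤ 1 := by nlinarith
    have hBS := fun x => orbit_bounded_iff (fun n : ℕ => S ^ n) (fun _ => True)
      (fun n => lam ^ n) (fun n => mu ^ n) r hr
      (fun n _ => pow_eigen S _ lam hev n) (fun n _ => pow_eigen S _ mu hew n)
      (fun n _ => by rw [abs_pow, abs_of_pos hmu0]; exact pow_le_one₀ hmu0.le hmu1)
      (fun n _ => pow_nonneg (by linarith) n)
      (fun C => by obtain ⟨n, hn⟩ := pow_unbounded_of_one_lt C hlam1; exact ⟨n, trivial, hn⟩) x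
    -- continuous part
    set s : ℝ := Real.sqrt c with hsdef
    have hs : 0 < s := Real.sqrt_pos.2 hc
    have hs2 : s ^ 2 = c := Real.sq_sqrt hc.le
    set A : Matrix (Fin 2) (Fin 2) ℝ := !![0, c; 1, 0] with hA
    have hevc : ∀ t : ℝ, 0 ≤ t →
        (NormedSpace.exp (t • A)).mulVec ![s, 1] = Real.exp (t * s) • ![s, 1] := by
      intro t _
      apply exp_eigen
      funext i
      fin_cases i
      · simp [hA, Matrix.mulVec, dotProduct, Fin.sum_univ_two]
        linear_combination (-t) * hs2
      · simp [hA, Matrix.mulVec, dotProduct, Fin.sum_univ_two]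
        try ring
    have hewc : ∀ t : ℝ, 0 ≤ t →
        (NormedSpace.exp (t • A)).mulVec ![-s, 1] = Real.exp (-(t * s)) • ![-s, 1] := by
      intro t _
      apply exp_eigen
      funext i
      fin_cases i
      · simp [hA, Matrix.mulVec, dotProduct, Fin.sum_univ_two]
        linear_combination (-t) * hs2
      · simp [hA, Matrix.mulVec, dotProduct, Fin.sum_univ_two]
        try ring
    have hBA := fun x => orbit_bounded_iff
      (fun t : ℝ => NormedSpace.exp (t • A)) (fun t => 0 ≤ t)
      (fun t => Real.exp (t * s)) (fun t => Real.exp (-(t * s))) s hs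
      hevc hewc
      (fun t ht => by
        rw [abs_of_pos (Real.exp_pos _)]
        exact Real.exp_le_one_iff.2 (by nlinarith))
      (fun t _ => (Real.exp_pos _).le)
      (fun C => by
        refine ⟨Real.log (max 1 (C + 1)) / s,
          div_nonneg (Real.log_nonneg (le_max_left _ _)) hs.le, ?_⟩
        show C < Real.exp (Real.log (max 1 (C + 1)) / s * s)
        rw [div_mul_cancel₀ _ hs.ne', Real.exp_log (by positivity)]
        have := le_max_right 1 (C + 1)
        linarith) x
    refine ⟨Submodule.span ℝ {(WithLp.toLp 2 ![-r, 1] : EuclideanSpace ℝ (Fin 2))},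
      Submodule.span ℝ {(WithLp.toLp 2 ![-s, 1] : EuclideanSpace ℝ (Fin 2))}, ?_, ?_, ?_, ?_⟩
    · have hset : ∀ x : EuclideanSpace ℝ (Fin 2), discOrbit S x =
          {y : EuclideanSpace ℝ (Fin 2) | ∃ n : ℕ, True ∧ y = (S ^ n).mulVec x} := by
        intro x
        ext y
        simp [discOrbit]
      ext x
      rw [SetLike.mem_coe]
      show _ ↔ IsBounded (discOrbit S x)
      rw [hset x]
      exact (hBS x).symm
    · exact finrank_span_singleton (w_ne_zero r)
    · ext x
      rw [SetLike.mem_coe]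
      show _ ↔ IsBounded (contOrbit A x)
      exact (hBA x).symm
    · exact finrank_span_singleton (w_ne_zero s)
end

section
/- Let A be a 2×2 real matrix with trace A = 0 and det A > 0, and let τ > 0. Then I − (τ/2)A is invertible, and the matrix S(τ) = (I − (τ/2)A)⁻¹ (I + (τ/2)A) given by the implicit midpoint rule satisfies det S(τ) = 1 and |trace S(τ)| < 2; consequently, for every x ∈ ℝ² the set {S(τ)ⁿ·x : n ∈ ℕ} is bounded. -/
open Matrix Bornology

private lemma mul_expand (A : Matrix (Fin 2) (Fin 2) ℝ)
    (hA2 : A * A = (-A.det) • (1 : Matrix (Fin 2) (Fin 2) ℝ)) (p q r s : ℝ) :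
    (p • 1 + q • A) * (r • 1 + s • A)
      = (p*r - A.det*q*s) • (1 : Matrix (Fin 2) (Fin 2) ℝ) + (p*s + q*r) • A := by
  rw [add_mul, mul_add, mul_add, smul_mul_assoc, smul_mul_assoc, smul_mul_assoc,
    smul_mul_assoc, mul_smul_comm, mul_smul_comm, mul_smul_comm, mul_smul_comm, hA2]
  simp only [one_mul, mul_one, smul_smul]
  module

set_option maxHeartbeats 1000000 in
theorem stmt_18 (A : Matrix (Fin 2) (Fin 2) ℝ) (hTr : A.trace = 0) (hDet : 0 < A.det)
    (τ : ℝ) (hτ : 0 < τ) :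
    IsUnit (1 - (τ / 2) • A) ∧
    ((1 - (τ / 2) • A)⁻¹ * (1 + (τ / 2) • A)).det = 1 ∧
    |((1 - (τ / 2) • A)⁻¹ * (1 + (τ / 2) • A)).trace| < 2 ∧
    ∀ x : EuclideanSpace ℝ (Fin 2),
      IsBounded (discOrbit ((1 - (τ / 2) • A)⁻¹ * (1 + (τ / 2) • A)) x) := by
  set c : ℝ := τ / 2 with hc
  have hcpos : 0 < c := by positivity
  set D : ℝ := A.det with hD
  have hTr' : A 0 0 + A 1 1 = 0 := by rw [← Matrix.trace_fin_two]; exact hTr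
  have h11 : A 1 1 = - A 0 0 := by linarith
  have hA2 : A * A = (-A.det) • (1 : Matrix (Fin 2) (Fin 2) ℝ) := by
    ext i j
    fin_cases i <;> fin_cases j <;>
      simp [Matrix.mul_apply, Fin.sum_univ_two, Matrix.det_fin_two, Matrix.one_apply,
        Matrix.smul_apply, h11] <;> ring
  have hdm : (1 - c • A).det = 1 + c^2 * D := by
    simp [Matrix.det_fin_two, Matrix.sub_apply, Matrix.smul_apply, Matrix.one_apply, h11, hD]
    ring
  have hdp : (1 + c • A).det = 1 + c^2 * D := by
    simp [Matrix.det_fin_two, Matrix.add_apply, Matrix.smul_apply, Matrix.one_apply, h11, hD]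
    ring
  have hdpos : 0 < 1 + c^2 * D := by nlinarith
  have hdne : (1 + c^2 * D) ≠ 0 := ne_of_gt hdpos
  have hUdet : IsUnit (1 - c • A).det := by
    rw [hdm]; exact isUnit_iff_ne_zero.2 hdne
  have hU : IsUnit (1 - c • A) := (Matrix.isUnit_iff_isUnit_det _).2 hUdet
  set d : ℝ := 1 + c^2 * D with hdd
  set a1 : ℝ := (1 - c^2 * D) / d with ha1
  set b1 : ℝ := 2 * c / d with hb1
  -- explicit formula for S
  have hmul1 : (1 - c • A) * (a1 • 1 + b1 • A) = 1 + c • A := by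
    have e1 : (1 : Matrix (Fin 2) (Fin 2) ℝ) - c • A = (1:ℝ) • 1 + (-c) • A := by module
    rw [e1, mul_expand A hA2]
    have e2 : (1:ℝ) * a1 - A.det * (-c) * b1 = 1 := by
      rw [ha1, hb1]; field_simp; ring
    have e3 : (1:ℝ) * b1 + (-c) * a1 = c := by
      rw [ha1, hb1]; field_simp; ring
    rw [e2, e3]; module
  have hS : (1 - c • A)⁻¹ * (1 + c • A) = a1 • 1 + b1 • A := by
    calc (1 - c • A)⁻¹ * (1 + c • A)
        = (1 - c • A)⁻¹ * ((1 - c • A) * (a1 • 1 + b1 • A)) := by rw [hmul1]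
      _ = ((1 - c • A)⁻¹ * (1 - c • A)) * (a1 • 1 + b1 • A) := by rw [mul_assoc]
      _ = a1 • 1 + b1 • A := by rw [Matrix.nonsing_inv_mul _ hUdet, one_mul]
  have hinv1 : a1^2 + D * b1^2 = 1 := by
    rw [ha1, hb1]; field_simp; ring
  refine ⟨hU, ?_, ?_, ?_⟩
  · rw [Matrix.det_mul, Matrix.det_nonsing_inv, hdm, hdp, Ring.inverse_eq_inv']
    exact inv_mul_cancel₀ hdne
  · rw [hS]
    have : (a1 • (1 : Matrix (Fin 2) (Fin 2) ℝ) + b1 • A).trace = 2 * a1 := by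
      simp [Matrix.trace_add, Matrix.trace_smul, Matrix.trace_one, hTr]
      ring
    rw [this, ha1, abs_lt]
    constructor
    · rw [show (2:ℝ) * ((1 - c^2*D)/d) = (2*(1-c^2*D))/d by ring, lt_div_iff₀ hdpos]
      nlinarith [mul_pos (pow_pos hcpos 2) hDet]
    · rw [show (2:ℝ) * ((1 - c^2*D)/d) = (2*(1-c^2*D))/d by ring, div_lt_iff₀ hdpos]
      nlinarith [mul_pos (pow_pos hcpos 2) hDet]
  · intro x
    rw [hS]
    set S : Matrix (Fin 2) (Fin 2) ℝ := a1 • 1 + b1 • A with hSdef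
    have key : ∀ n : ℕ, ∃ a b : ℝ, S ^ n = a • 1 + b • A ∧ a^2 + D * b^2 = 1 := by
      intro n
      induction n with
      | zero => exact ⟨1, 0, by simp, by ring⟩
      | succ n ih =>
        obtain ⟨a, b, hab, hinv⟩ := ih
        refine ⟨a * a1 - D * b * b1, a * b1 + b * a1, ?_, ?_⟩
        · rw [pow_succ, hab, hSdef, mul_expand A hA2, ← hD]
        · linear_combination (a1^2 + D * b1^2) * hinv + hinv1
    set Ax : EuclideanSpace ℝ (Fin 2) := WithLp.toLp 2 (A.mulVec x) with hAx
    have hsD : (0:ℝ) < Real.sqrt D := Real.sqrt_pos.2 hDet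
    rw [isBounded_iff_forall_norm_le]
    refine ⟨‖x‖ + (Real.sqrt D)⁻¹ * ‖Ax‖, ?_⟩
    rintro y ⟨n, hyn⟩
    obtain ⟨a, b, hab, hinv⟩ := key n
    have hy : y = a • x + b • Ax := by
      ext i
      rw [hyn, hab]
      simp [Matrix.add_mulVec, Matrix.smul_mulVec, Matrix.one_mulVec, hAx,
        PiLp.add_apply, PiLp.smul_apply]
      fin_cases i <;> simp
    rw [hy]
    have ha : |a| ≤ 1 := by nlinarith [abs_nonneg a, sq_abs a, sq_nonneg b]
    have hb : |b| ≤ (Real.sqrt D)⁻¹ := by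
      have h2 : (|b| * Real.sqrt D)^2 ≤ 1 := by
        rw [mul_pow, sq_abs, Real.sq_sqrt hDet.le]; nlinarith [sq_nonneg a]
      have h3 : |b| * Real.sqrt D ≤ 1 := by
        nlinarith [mul_nonneg (abs_nonneg b) (Real.sqrt_nonneg D)]
      rw [inv_eq_one_div, le_div_iff₀ hsD]
      exact h3
    calc ‖a • x + b • Ax‖ ≤ ‖a • x‖ + ‖b • Ax‖ := norm_add_le _ _
      _ = |a| * ‖x‖ + |b| * ‖Ax‖ := by rw [norm_smul, norm_smul, Real.norm_eq_abs, Real.norm_eq_abs]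
      _ ≤ 1 * ‖x‖ + (Real.sqrt D)⁻¹ * ‖Ax‖ := by
          gcongr
      _ = ‖x‖ + (Real.sqrt D)⁻¹ * ‖Ax‖ := by ring
end
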